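/- Let V be a finite-dimensional real inner product space and let φ, h : V → V be linear endomorphisms such that h is self-adjoint, h anticommutes with φ (hφ + φh = 0), and the kernel of φ is contained in the kernel of h. Then trace(h) = 0. -/

import Mathlib

theorem anticommuting_symmetric_trace_zero
    {V : Type*} [NormedAddCommGroup V] [InnerProductSpace ℝ V]
    [FiniteDimensional ℝ V]
    (φ h : V →ₗ[ℝ] V)
    (hsym : ∀ x y : V, (inner ℝ (h x) y : ℝ) = inner ℝ x (h y))
    (hanti : ∀ x : V, h (φ x) + φ (h x) = 0)
    (hker : LinearMap.ker φ ≤ LinearMap.ker h) :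
    LinearMap.trace ℝ V h = 0 := by
  classical
  set E : Submodule ℝ V := LinearMap.ker h with hE
  -- P : orthogonal projection onto ker h, as a linear endomorphism
  set P : V →ₗ[ℝ] V := E.subtype ∘ₗ (E.orthogonalProjectionOnto : V →L[ℝ] E).toLinearMap with hP
  have hPapply : ∀ x : V, P x = (E.orthogonalProjectionOnto x : V) := fun x => rfl
  -- h ∘ P = 0
  have hhP : ∀ x, h (P x) = 0 := by
    intro x
    have : P x ∈ E := (E.orthogonalProjectionOnto x).2
    simpa [hE, LinearMap.mem_ker] using this
  -- range h ⊥ ker h : for x, h x ∈ Eᗮ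
  have hhmem : ∀ x, h x ∈ Eᗮ := by
    intro x
    intro y hy
    have : h y = 0 := hy
    rw [real_inner_comm, hsym, this, inner_zero_right]
  -- P ∘ h = 0
  have hPh : ∀ x, P (h x) = 0 := by
    intro x
    have := Submodule.orthogonalProjectionOnto_apply_of_mem_orthogonal (K := E) (hhmem x)
    rw [hPapply, this, Submodule.coe_zero]
  have hanti' : ∀ x, h (φ x) = - φ (h x) := by
    intro x; exact eq_neg_of_add_eq_zero_left (hanti x)
  -- define T
  set T : V →ₗ[ℝ] V := (φ - P ∘ₗ φ) + P with hT
  have hTapply : ∀ x, T x = (φ x - P (φ x)) + P x := fun x => rfl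
  -- h ∘ T = - T ∘ h
  have hkey : ∀ x, h (T x) = - T (h x) := by
    intro x
    have h1 : h (T x) = h (φ x) := by
      rw [hTapply]; rw [map_add, map_sub, hhP, hhP, sub_zero, add_zero]
    have h2 : T (h x) = φ (h x) := by
      rw [hTapply, hPh, add_zero]
      have : P (φ (h x)) = 0 := by
        have hφh : φ (h x) = -h (φ x) := eq_neg_of_add_eq_zero_right (hanti x)
        rw [hφh, map_neg, hPh, neg_zero]
      rw [this, sub_zero]
    rw [h1, h2, hanti' x]
  -- T is injective
  have hTinj : Function.Injective T := by
    rw [← LinearMap.ker_eq_bot]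
    rw [Submodule.eq_bot_iff]
    intro x hx
    have hx0 : T x = 0 := hx
    rw [hTapply] at hx0
    -- φ x - P (φ x) ∈ Eᗮ, P x ∈ E
    have hmem1 : φ x - P (φ x) ∈ Eᗮ := Submodule.sub_starProjection_mem_orthogonal (K := E) (φ x)
    have hmem2 : P x ∈ E := (E.orthogonalProjectionOnto x).2
    have hPx : P x = 0 := by
      have h0 : (inner ℝ (φ x - P (φ x) + P x) (P x) : ℝ) = 0 := by
        rw [hx0, inner_zero_left]
      rw [inner_add_left] at h0
      have hperp : (inner ℝ (φ x - P (φ x)) (P x) : ℝ) = 0 := by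
        rw [real_inner_comm]; exact hmem1 (P x) hmem2
      rw [hperp, zero_add] at h0
      exact inner_self_eq_zero.mp h0
    have hQ : φ x - P (φ x) = 0 := by
      rw [hPx, add_zero] at hx0; exact hx0
    have hφxE : φ x ∈ E := by
      have : φ x = P (φ x) := by rw [sub_eq_zero] at hQ; exact hQ
      rw [this]; exact (E.orthogonalProjectionOnto (φ x)).2
    -- hence h (φ x) = 0, so φ (h x) = 0, so h x ∈ ker φ ⊆ ker h
    have h1 : h (φ x) = 0 := hφxE
    have h2 : φ (h x) = 0 := by
      have := hanti x; rw [h1, zero_add] at this; exact this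
    have h3 : h (h x) = 0 := hker h2
    have h4 : h x = 0 := by
      have : (inner ℝ (h (h x)) x : ℝ) = 0 := by rw [h3, inner_zero_left]
      rw [hsym, real_inner_comm] at this
      have := (real_inner_self_eq_norm_sq (h x)) ▸ this
      have hn : ‖h x‖ = 0 := by
        nlinarith [norm_nonneg (h x), real_inner_self_eq_norm_sq (h x)]
      exact norm_eq_zero.mp hn
    have hxE : x ∈ E := h4
    have : P x = x := by
      rw [hPapply]; exact Submodule.starProjection_eq_self_iff.mpr hxE
    rw [hPx] at this; exact this.symm
  -- T bijective; build linear equiv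
  have hTsurj : Function.Surjective T :=
    (LinearMap.injective_iff_surjective).mp hTinj
  let e : V ≃ₗ[ℝ] V := LinearEquiv.ofBijective T ⟨hTinj, hTsurj⟩
  have hconj : e.conj h = -h := by
    apply LinearMap.ext
    intro x
    obtain ⟨y, rfl⟩ := hTsurj x
    have : e.conj h (T y) = T (h (e.symm (T y))) := rfl
    rw [this]
    have hsymmT : e.symm (T y) = y := by
      apply hTinj
      have : T (e.symm (T y)) = e (e.symm (T y)) := rfl
      rw [this, LinearEquiv.apply_symm_apply]
    rw [hsymmT]
    simp only [LinearMap.neg_apply]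
    rw [hkey y, neg_neg]
  have := LinearMap.trace_conj' h e
  rw [hconj, map_neg] at this
  linarith
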